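/- For every integer n ≥ 1, the following identity holds in the polynomial ring F_2[t_1,…,t_n]: the product, taken over all subsets S ⊆ {1,…,n} of odd cardinality, of the linear forms Σ_{i∈S} t_i, equals P_n. (This is the paper's key combinatorial Lemma: ∏_{k odd} m_k = Σ_{2^{e_1}+⋯+2^{e_n}=2^{n−1}} t_1^{2^{e_1}} ⋯ t_n^{2^{e_n}}, where m_k = ∏_{1≤i_1<⋯<i_k≤n} (t_{i_1}+⋯+t_{i_k}).) -/

import Mathlib

open MvPolynomial

/-- `P n` is the sum, over all `n`-tuples `(e 1, …, e n)` of nonnegative integers with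
`2^(e 1) + ⋯ + 2^(e n) = 2^(n-1)`, of the monomials `t 1^(2^(e 1)) ⋯ t n^(2^(e n))`
in `F₂[t 1, …, t n]`. -/
noncomputable def P (n : ℕ) : MvPolynomial (Fin n) (ZMod 2) :=
  ∑ᶠ e : Fin n → ℕ,
    if (∑ i, 2 ^ e i) = 2 ^ (n - 1) then ∏ i, X i ^ 2 ^ e i else 0

section Aux
open Finset

lemma two_pow_pred (m : ℕ) (hm : 0 < m) : 2 ^ m = 2 * 2 ^ (m-1) := by
  conv_lhs => rw [show m = (m-1)+1 by omega]
  rw [pow_succ]; ring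

lemma even_sum_of_no_zero (M : Multiset ℕ) (h : (0:ℕ) ∉ M) :
    (M.map (fun a => 2 ^ a)).sum % 2 = 0 := by
  induction M using Multiset.induction with
  | empty => simp
  | cons a s ihs =>
    simp only [Multiset.map_cons, Multiset.sum_cons]
    have ha : a ≠ 0 := fun he => h (he ▸ Multiset.mem_cons_self a s)
    have h2 : 2 ^ a = 2 * 2 ^ (a-1) := two_pow_pred a (by omega)
    have := ihs (fun hm => h (Multiset.mem_cons_of_mem hm))
    omega

lemma double_of_no_zero (M : Multiset ℕ) (h : (0:ℕ) ∉ M) :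
    (M.map (fun a => 2 ^ a)).sum = 2 * (M.map (fun a => 2 ^ (a-1))).sum := by
  induction M using Multiset.induction with
  | empty => simp
  | cons a s ihs =>
    simp only [Multiset.map_cons, Multiset.sum_cons]
    have ha : a ≠ 0 := fun he => h (he ▸ Multiset.mem_cons_self a s)
    rw [ihs (fun hm => h (Multiset.mem_cons_of_mem hm)), two_pow_pred a (by omega)]
    ring

/-- A multiset of exponents of powers of two summing to `2^m - 1` has at least `m` elements. -/
lemma popcount_aux : ∀ c m (M : Multiset ℕ), Multiset.card M ≤ c →
    (M.map (fun a => 2 ^ a)).sum = 2 ^ m - 1 → m ≤ Multiset.card M := by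
  intro c
  induction c with
  | zero =>
    intro m M hc hs
    have hM : M = 0 := by rwa [Nat.le_zero, Multiset.card_eq_zero] at hc
    subst hM
    simp only [Multiset.map_zero, Multiset.sum_zero] at hs
    rcases Nat.eq_zero_or_pos m with h | h
    · simp [h]
    · have := two_pow_pred m h
      have := Nat.one_le_two_pow (n := m - 1)
      omega
  | succ c ih =>
    intro m M hc hs
    rcases Nat.eq_zero_or_pos m with rfl | hm
    · exact Nat.zero_le _
    have h2 : 2 ^ m = 2 * 2 ^ (m-1) := two_pow_pred m hm
    have h1 : 1 ≤ 2 ^ (m-1) := Nat.one_le_two_pow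
    have hzero : (0 : ℕ) ∈ M := by
      by_contra h0
      have := even_sum_of_no_zero M h0
      omega
    obtain ⟨M₀, rfl⟩ := Multiset.exists_cons_of_mem hzero
    simp only [Multiset.map_cons, Multiset.sum_cons, pow_zero] at hs
    simp only [Multiset.card_cons] at hc ⊢
    by_cases h00 : (0:ℕ) ∈ M₀
    · obtain ⟨M₁, rfl⟩ := Multiset.exists_cons_of_mem h00
      simp only [Multiset.map_cons, Multiset.sum_cons, pow_zero] at hs
      simp only [Multiset.card_cons] at hc ⊢
      have hkey := ih m ((1:ℕ) ::ₘ M₁) (by simp; omega) (by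
        simp only [Multiset.map_cons, Multiset.sum_cons, pow_one]
        omega)
      simp only [Multiset.card_cons] at hkey
      omega
    · have hdl := double_of_no_zero M₀ h00
      have hkey := ih (m-1) (M₀.map (fun a => a - 1)) (by simp; omega) (by
        rw [Multiset.map_map]
        have : (M₀.map (fun a => 2 ^ (a-1))).sum = 2 ^ (m-1) - 1 := by omega
        simpa [Function.comp] using this)
      simp only [Multiset.card_map] at hkey
      omega

def ebox (m B : ℕ) : Finset (Fin m → ℕ) := Fintype.piFinset fun _ => Finset.range (B+1)

lemma mem_ebox {m B : ℕ} {e : Fin m → ℕ} : e ∈ ebox m B ↔ ∀ i, e i ≤ B := by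
  unfold ebox
  simp [Fintype.mem_piFinset, Nat.lt_succ_iff]

/-- truncated sum of monomials `∏ X i ^ 2^(e i)` over solutions of `c + ∑ 2^(e i) = N`. -/
noncomputable def SB (m B c N : ℕ) : MvPolynomial (Fin m) (ZMod 2) :=
  ∑ e ∈ ebox m B, if c + (∑ i, 2 ^ e i) = N then ∏ i, X i ^ 2 ^ e i else 0

lemma guard_bound {m c N : ℕ} {e : Fin m → ℕ} (hg : c + (∑ i, 2 ^ e i) = N) (i : Fin m) :
    e i ≤ N := by
  have h1 : 2 ^ e i ≤ ∑ k, 2 ^ e k :=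
    Finset.single_le_sum (f := fun k => 2 ^ e k) (fun k _ => Nat.zero_le _) (mem_univ i)
  have h2 : e i < 2 ^ e i := Nat.lt_two_pow_self
  omega

/-- the value of `SB` does not depend on the size of the box, for large boxes. -/
lemma SB_box (m : ℕ) {B B' N : ℕ} (c : ℕ) (hB : N - c ≤ B) (hB' : B ≤ B') :
    SB m B' c N = SB m B c N := by
  rw [SB, SB]
  refine (Finset.sum_subset ?_ ?_).symm
  · intro e he
    rw [mem_ebox] at he ⊢
    exact fun i => (he i).trans hB'
  · intro e _ he
    rw [mem_ebox] at he
    push_neg at he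
    obtain ⟨i, hi⟩ := he
    rw [if_neg]
    intro hg
    have h1 : 2 ^ e i ≤ ∑ k, 2 ^ e k :=
      Finset.single_le_sum (f := fun k => 2 ^ e k) (fun k _ => Nat.zero_le _) (mem_univ i)
    have h2 : e i < 2 ^ e i := Nat.lt_two_pow_self
    omega

lemma P_eq (n : ℕ) : P n = SB n (2 ^ (n-1)) 0 (2 ^ (n-1)) := by
  rw [P, SB]
  rw [finsum_eq_sum_of_support_subset _ (s := ebox n (2 ^ (n-1)))]
  · refine Finset.sum_congr rfl (fun e _ => ?_)
    simp only [zero_add]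
  · intro e he
    simp only [Function.mem_support, ne_eq] at he
    have hg : (∑ i, 2 ^ e i) = 2 ^ (n-1) := by
      by_contra h
      exact he (if_neg h)
    simp only [Finset.coe_sort_coe, mem_coe, mem_ebox]
    exact fun i => guard_bound (c := 0) (by omega) i

lemma no_zero_sol {m : ℕ} (hm : 1 ≤ m) (a : Fin m → ℕ) (i : Fin m) (h0 : a i = 0) :
    (∑ k, 2 ^ a k) ≠ 2 ^ m := by
  intro hs
  rw [← Finset.add_sum_erase _ _ (mem_univ i), h0, pow_zero] at hs
  have hsum : (((univ.erase i).val.map a).map (fun x => 2 ^ x)).sum = 2 ^ m - 1 := by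
    rw [Multiset.map_map]
    have : ∑ k ∈ univ.erase i, 2 ^ a k = 2 ^ m - 1 := by
      have := Nat.one_le_two_pow (n := m)
      omega
    simpa [Finset.sum] using this
  have hcard := popcount_aux _ m _ le_rfl hsum
  simp only [Multiset.card_map] at hcard
  have : ((univ : Finset (Fin m)).erase i).card = m - 1 := by
    rw [Finset.card_erase_of_mem (mem_univ i), Finset.card_univ, Fintype.card_fin]
  rw [show Multiset.card (univ.erase i).val = (univ.erase i).card from rfl, this] at hcard
  omega

lemma sum_ebox_succ {M : Type*} [AddCommMonoid M] (m B : ℕ) (f : (Fin (m+1) → ℕ) → M) :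
    ∑ e ∈ Fintype.piFinset (fun _ : Fin (m+1) => Finset.range (B+1)), f e =
      ∑ j ∈ Finset.range (B+1), ∑ a ∈ Fintype.piFinset (fun _ : Fin m => Finset.range (B+1)),
        f (Fin.cons j a) := by
  rw [← Finset.sum_product']
  refine Finset.sum_nbij' (fun e => (e 0, fun i => e i.succ)) (fun p => Fin.cons p.1 p.2)
    ?_ ?_ ?_ ?_ ?_
  · intro e he
    simp only [Fintype.mem_piFinset] at he
    simp only [Finset.mem_product, Fintype.mem_piFinset]
    exact ⟨he 0, fun i => he i.succ⟩
  · intro p hp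
    simp only [Finset.mem_product, Fintype.mem_piFinset] at hp
    simp only [Fintype.mem_piFinset]
    intro i
    refine Fin.cases ?_ ?_ i
    · simpa using hp.1
    · intro k; simpa using hp.2 k
  · intro e he
    exact Fin.cons_self_tail e
  · intro p hp
    simp only [Fin.cons_zero]
    exact Prod.ext rfl (funext fun i => by simp)
  · intro e he
    exact congrArg f (Fin.cons_self_tail e).symm

lemma card_even_subsets (m : ℕ) (hm : 1 ≤ m) :
    ((univ : Finset (Finset (Fin m))).filter (fun T => Even T.card)).card = 2 ^ (m-1) := by
  classical
  set z : Fin m := ⟨0, by omega⟩ with hz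
  have key : ((univ : Finset (Finset (Fin m))).filter (fun T => Even T.card)).card =
      ((univ : Finset (Finset (Fin m))).filter (fun T => ¬ Even T.card)).card := by
    refine Finset.card_nbij' (fun T => if z ∈ T then T.erase z else insert z T)
      (fun T => if z ∈ T then T.erase z else insert z T) ?_ ?_ ?_ ?_
    · intro T hT
      simp only [mem_coe, Finset.mem_filter, Finset.mem_univ, true_and] at hT ⊢
      by_cases h : z ∈ T
      · rw [if_pos h, Finset.card_erase_of_mem h]
        have : T.card ≠ 0 := fun hc => by simp [Finset.card_eq_zero] at hc; simp [hc] at h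
        rcases hT with ⟨l, hl⟩
        intro he
        rcases he with ⟨k, hk⟩
        omega
      · rw [if_neg h, Finset.card_insert_of_notMem h]
        rcases hT with ⟨l, hl⟩
        intro he
        rcases he with ⟨k, hk⟩
        omega
    · intro T hT
      simp only [mem_coe, Finset.mem_filter, Finset.mem_univ, true_and] at hT ⊢
      by_cases h : z ∈ T
      · rw [if_pos h, Finset.card_erase_of_mem h]
        have hc : T.card ≠ 0 := fun hc => by simp [Finset.card_eq_zero] at hc; simp [hc] at h
        rw [Nat.even_sub (by omega)]
        simp only [Nat.not_even_iff_odd] at hT ⊢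
        simpa using hT
      · rw [if_neg h, Finset.card_insert_of_notMem h]
        rw [Nat.even_add_one]
        simpa using hT
    · intro T hT
      dsimp only
      by_cases h : z ∈ T
      · rw [if_pos h, if_neg (Finset.notMem_erase z T), Finset.insert_erase h]
      · rw [if_neg h, if_pos (Finset.mem_insert_self z T), Finset.erase_insert h]
    · intro T hT
      dsimp only
      by_cases h : z ∈ T
      · rw [if_pos h, if_neg (Finset.notMem_erase z T), Finset.insert_erase h]
      · rw [if_neg h, if_pos (Finset.mem_insert_self z T), Finset.erase_insert h]
  have htot := Finset.card_filter_add_card_filter_not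
    (s := (univ : Finset (Finset (Fin m)))) (p := fun T => Even T.card)
  rw [Finset.card_univ, Fintype.card_finset, Fintype.card_fin] at htot
  have h2m : 2 ^ m = 2 * 2 ^ (m-1) := by
    conv_lhs => rw [show m = (m-1)+1 by omega]
    rw [pow_succ]; ring
  omega

lemma linform_inj {m : ℕ} : Function.Injective
    (fun T : Finset (Fin m) => ∑ i ∈ T, (X i : MvPolynomial (Fin m) (ZMod 2))) := by
  intro T T' h
  by_contra hne
  -- get an element in the symmetric difference
  have : ∃ j, (j ∈ T ∧ j ∉ T') ∨ (j ∈ T' ∧ j ∉ T) := by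
    by_contra hc
    push_neg at hc
    exact hne (Finset.ext fun j => by
      have := hc j
      tauto)
  obtain ⟨j, hj⟩ := this
  have hcoeff : ∀ S : Finset (Fin m), MvPolynomial.coeff (Finsupp.single j 1)
      (∑ i ∈ S, (X i : MvPolynomial (Fin m) (ZMod 2))) = if j ∈ S then 1 else 0 := by
    intro S
    rw [MvPolynomial.coeff_sum]
    have : ∀ i ∈ S, MvPolynomial.coeff (Finsupp.single j 1) (X i : MvPolynomial (Fin m) (ZMod 2))
        = if i = j then 1 else 0 := by
      intro i _
      rw [MvPolynomial.coeff_X']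
      congr 1
      simp [Finsupp.single_eq_single_iff]
    rw [Finset.sum_congr rfl this]
    simp
  have := congrArg (MvPolynomial.coeff (Finsupp.single j 1)) h
  simp only at this
  rw [hcoeff T, hcoeff T'] at this
  rcases hj with ⟨h1, h2⟩ | ⟨h1, h2⟩ <;> simp [h1, h2] at this

lemma psi_P (m : ℕ) (hm : 1 ≤ m) :
    (finSuccEquiv (ZMod 2) m) (P (m+1)) =
      ∑ j ∈ Finset.range m,
        Polynomial.C (SB m (2^m) (2^j) (2^m)) * Polynomial.X ^ (2^j) := by
  rw [P_eq, show (m+1) - 1 = m from rfl, SB]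
  rw [map_sum]
  rw [show (ebox (m+1) (2^m)) = Fintype.piFinset (fun _ : Fin (m+1) => Finset.range (2^m+1))
    from rfl]
  rw [sum_ebox_succ]
  rw [show (Fintype.piFinset (fun _ : Fin m => Finset.range (2^m+1))) = ebox m (2^m) from rfl]
  have hterm : ∀ j ∈ Finset.range (2^m+1), ∀ a ∈ ebox m (2^m),
      (finSuccEquiv (ZMod 2) m)
        (if 0 + (∑ i, 2 ^ (Fin.cons j a : Fin (m+1) → ℕ) i) = 2^m then
          ∏ i, X i ^ 2 ^ (Fin.cons j a : Fin (m+1) → ℕ) i else 0) =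
      if 2^j + (∑ i, 2 ^ a i) = 2^m then
        Polynomial.C (∏ i, (X i : MvPolynomial (Fin m) (ZMod 2)) ^ 2 ^ a i) *
          Polynomial.X ^ (2^j) else 0 := by
    intro j _ a _
    rw [apply_ite (finSuccEquiv (ZMod 2) m), map_zero]
    have hsum : 0 + (∑ i, 2 ^ (Fin.cons j a : Fin (m+1) → ℕ) i) = 2^j + ∑ i, 2 ^ a i := by
      rw [zero_add, Fin.sum_univ_succ]
      simp [Fin.cons_succ]
    rw [hsum]
    congr 1
    rw [Fin.prod_univ_succ]
    simp only [Fin.cons_zero, Fin.cons_succ]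
    rw [map_mul, map_pow, finSuccEquiv_X_zero, map_prod]
    simp_rw [map_pow, finSuccEquiv_X_succ]
    have hC : (∏ x : Fin m, (Polynomial.C (X x : MvPolynomial (Fin m) (ZMod 2))) ^ 2 ^ a x)
        = Polynomial.C (∏ i : Fin m, (X i : MvPolynomial (Fin m) (ZMod 2)) ^ 2 ^ a i) := by
      rw [map_prod]
      exact Finset.prod_congr rfl (fun x _ => by rw [map_pow])
    rw [hC]
    ring
  rw [Finset.sum_congr rfl (fun j hj => Finset.sum_congr rfl (fun a ha => hterm j hj a ha))]
  -- now pull the inner sum inside C and X-power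
  have hinner : ∀ j : ℕ, ∑ a ∈ ebox m (2^m),
      (if 2^j + (∑ i, 2 ^ a i) = 2^m then
        Polynomial.C (∏ i, (X i : MvPolynomial (Fin m) (ZMod 2)) ^ 2 ^ a i) *
          Polynomial.X ^ (2^j) else 0) =
      Polynomial.C (SB m (2^m) (2^j) (2^m)) * Polynomial.X ^ (2^j) := by
    intro j
    rw [SB, map_sum, Finset.sum_mul]
    refine Finset.sum_congr rfl (fun a _ => ?_)
    rw [apply_ite Polynomial.C, map_zero, ite_mul, zero_mul]
  rw [Finset.sum_congr rfl (fun j _ => hinner j)]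
  -- shrink the range
  refine (Finset.sum_subset ?_ ?_).symm
  · intro j hj
    simp only [Finset.mem_range] at hj ⊢
    have : m < 2 ^ m := (Nat.lt_two_pow_self (n := m))
    omega
  · intro j hj hj'
    simp only [Finset.mem_range] at hj hj'
    push_neg at hj'
    have hzero : SB m (2^m) (2^j) (2^m) = 0 := by
      rw [SB]
      refine Finset.sum_eq_zero (fun a _ => ?_)
      rw [if_neg]
      intro hg
      have h1 : 2 ^ m ≤ 2 ^ j := Nat.pow_le_pow_right (by norm_num) hj'
      have h2 : 1 ≤ ∑ i, 2 ^ a i := by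
        have : (1:ℕ) ≤ 2 ^ a ⟨0, by omega⟩ := Nat.one_le_two_pow
        have hle : 2 ^ a ⟨0, by omega⟩ ≤ ∑ i, 2 ^ a i :=
          Finset.single_le_sum (f := fun k => 2 ^ a k) (fun k _ => Nat.zero_le _)
            (mem_univ (⟨0, by omega⟩ : Fin m))
        omega
      omega
    rw [hzero, map_zero, zero_mul]

lemma SB_top (m : ℕ) (hm : 1 ≤ m) : SB m (2^m) (2^(m-1)) (2^m) = P m := by
  rw [P_eq]
  have h2 : 2 ^ m = 2 * 2 ^ (m-1) := two_pow_pred m hm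
  rw [SB_box m (2^(m-1)) (B := 2^(m-1)) (by omega) (by omega)]
  rw [SB, SB]
  refine Finset.sum_congr rfl (fun e _ => ?_)
  refine if_congr ?_ rfl rfl
  omega

lemma innerSB (m : ℕ) (hm : 1 ≤ m) (i : Fin m) :
    ∑ j ∈ Finset.range m, (X i : MvPolynomial (Fin m) (ZMod 2)) ^ (2^j) * SB m (2^m) (2^j) (2^m)
      = SB m (2^m) 0 (2^m) := by
  classical
  have hmle : m ≤ 2^m := ((Nat.lt_two_pow_self (n := m))).le
  -- expand LHS into a sum over pairs
  have step1 : ∑ j ∈ Finset.range m,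
      (X i : MvPolynomial (Fin m) (ZMod 2)) ^ (2^j) * SB m (2^m) (2^j) (2^m) =
      ∑ p ∈ (Finset.range m ×ˢ ebox m (2^m)).filter
          (fun p => 2 ^ p.1 + (∑ k, 2 ^ p.2 k) = 2 ^ m),
        (X i : MvPolynomial (Fin m) (ZMod 2)) ^ (2^p.1) * ∏ k, X k ^ 2 ^ p.2 k := by
    rw [Finset.sum_filter, Finset.sum_product]
    refine Finset.sum_congr rfl (fun j _ => ?_)
    rw [SB, Finset.mul_sum]
    refine Finset.sum_congr rfl (fun a _ => ?_)
    rw [mul_ite, mul_zero]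
  rw [step1]
  set G := (Finset.range m ×ˢ ebox m (2^m)).filter
      (fun p : ℕ × (Fin m → ℕ) => 2 ^ p.1 + (∑ k, 2 ^ p.2 k) = 2 ^ m) with hG
  have hGmem : ∀ p ∈ G, p.1 < m ∧ (∀ k, p.2 k ≤ 2^m) ∧ 2 ^ p.1 + (∑ k, 2 ^ p.2 k) = 2 ^ m := by
    intro p hp
    rw [hG, Finset.mem_filter, Finset.mem_product, Finset.mem_range, mem_ebox] at hp
    exact ⟨hp.1.1, hp.1.2, hp.2⟩
  have hsnd_lt : ∀ p ∈ G, p.2 i < m := by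
    intro p hp
    obtain ⟨h1, h2, h3⟩ := hGmem p hp
    have hle : 2 ^ p.2 i ≤ ∑ k, 2 ^ p.2 k :=
      Finset.single_le_sum (f := fun k => 2 ^ p.2 k) (fun k _ => Nat.zero_le _) (mem_univ i)
    have hp1 : 1 ≤ 2 ^ p.1 := Nat.one_le_two_pow
    by_contra hcon
    push_neg at hcon
    have : 2 ^ m ≤ 2 ^ p.2 i := Nat.pow_le_pow_right (by norm_num) hcon
    omega
  -- split into fixed and moved points
  rw [← Finset.sum_filter_add_sum_filter_not G (fun p => p.2 i = p.1)]
  have hmoved : ∑ p ∈ G.filter (fun p => ¬ p.2 i = p.1),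
      (X i : MvPolynomial (Fin m) (ZMod 2)) ^ (2^p.1) * ∏ k, X k ^ 2 ^ p.2 k = 0 := by
    refine Finset.sum_involution
      (g := fun p _ => (p.2 i, Function.update p.2 i p.1)) ?_ ?_ ?_ ?_
    · -- f p + f (g p) = 0
      intro p hp
      dsimp only
      have hval : (X i : MvPolynomial (Fin m) (ZMod 2)) ^ (2^(p.2 i)) *
          ∏ k, X k ^ 2 ^ (Function.update p.2 i p.1 k) =
          (X i : MvPolynomial (Fin m) (ZMod 2)) ^ (2^p.1) * ∏ k, X k ^ 2 ^ p.2 k := by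
        rw [← Finset.mul_prod_erase univ (fun k => X k ^ 2 ^ (Function.update p.2 i p.1 k))
            (mem_univ i),
          ← Finset.mul_prod_erase univ (fun k => X k ^ 2 ^ p.2 k) (mem_univ i)]
        rw [Function.update_self]
        rw [Finset.prod_congr rfl (fun k hk => by
          rw [Function.update_of_ne (Finset.mem_erase.mp hk).1])]
        ring
      rw [hval, CharTwo.add_self_eq_zero]
    · -- nonzero → g p ≠ p
      intro p hp _
      have hne : p.2 i ≠ p.1 := (Finset.mem_filter.mp hp).2
      intro he
      exact hne (congrArg Prod.fst he)
    · -- g maps the set to itself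
      intro p hp
      have hpf := Finset.mem_filter.mp hp
      obtain ⟨h1, h2, h3⟩ := hGmem p hpf.1
      have hne : p.2 i ≠ p.1 := hpf.2
      have hlt : p.2 i < m := hsnd_lt p hpf.1
      rw [Finset.mem_filter]
      constructor
      · rw [hG, Finset.mem_filter, Finset.mem_product, Finset.mem_range, mem_ebox]
        refine ⟨⟨hlt, ?_⟩, ?_⟩
        · intro k
          dsimp only
          rcases eq_or_ne k i with rfl | hk
          · rw [Function.update_self]; omega
          · rw [Function.update_of_ne hk]; exact h2 k
        · -- guard preserved
          dsimp only
          have hsum : ∑ k, 2 ^ (Function.update p.2 i p.1 k) =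
              2 ^ p.1 + ∑ k ∈ univ.erase i, 2 ^ p.2 k := by
            rw [← Finset.add_sum_erase univ (fun k => 2 ^ (Function.update p.2 i p.1 k))
              (mem_univ i), Function.update_self]
            congr 1
            refine Finset.sum_congr rfl (fun k hk => by
              rw [Function.update_of_ne (Finset.mem_erase.mp hk).1])
          have horig : ∑ k, 2 ^ p.2 k = 2 ^ p.2 i + ∑ k ∈ univ.erase i, 2 ^ p.2 k := by
            rw [← Finset.add_sum_erase univ (fun k => 2 ^ p.2 k) (mem_univ i)]
          omega
      · dsimp only
        rw [Function.update_self]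
        exact fun he => hne he.symm
    · -- involution
      intro p hp
      dsimp only
      have : Function.update (Function.update p.2 i p.1) i (p.2 i) = p.2 := by
        rw [Function.update_idem, Function.update_eq_self]
      simp only [Function.update_self, this]
  rw [hmoved, add_zero]
  -- fixed part equals the full `SB`
  have hRHS : SB m (2^m) 0 (2^m) =
      ∑ b ∈ (ebox m (2^m)).filter (fun b => 0 + (∑ k, 2 ^ b k) = 2 ^ m),
        ∏ k, X k ^ 2 ^ b k := by
    rw [SB, Finset.sum_filter]
  rw [hRHS]
  refine Finset.sum_nbij' (i := fun p => Function.update p.2 i (p.2 i + 1))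
    (j := fun b => (b i - 1, Function.update b i (b i - 1))) ?_ ?_ ?_ ?_ ?_
  · -- forward membership
    intro p hp
    have hpf := Finset.mem_filter.mp hp
    obtain ⟨h1, h2, h3⟩ := hGmem p hpf.1
    have hfix : p.2 i = p.1 := hpf.2
    rw [Finset.mem_filter, mem_ebox]
    have hsum : ∑ k, 2 ^ (Function.update p.2 i (p.2 i + 1) k) =
        2 ^ (p.2 i + 1) + ∑ k ∈ univ.erase i, 2 ^ p.2 k := by
      rw [← Finset.add_sum_erase univ _ (mem_univ i), Function.update_self]
      congr 1
      refine Finset.sum_congr rfl (fun k hk => by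
        rw [Function.update_of_ne (Finset.mem_erase.mp hk).1])
    have horig : ∑ k, 2 ^ p.2 k = 2 ^ p.2 i + ∑ k ∈ univ.erase i, 2 ^ p.2 k := by
      rw [← Finset.add_sum_erase univ (fun k => 2 ^ p.2 k) (mem_univ i)]
    have hpow : 2 ^ (p.2 i + 1) = 2 ^ p.2 i + 2 ^ p.2 i := by rw [pow_succ]; ring
    constructor
    · intro k
      rcases eq_or_ne k i with rfl | hk
      · rw [Function.update_self]
        have : p.2 k < m := by omega
        omega
      · rw [Function.update_of_ne hk]; exact h2 k
    · rw [← hfix] at h3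
      omega
  · -- backward membership
    intro b hb
    have hbf := Finset.mem_filter.mp hb
    have hbox := mem_ebox.mp hbf.1
    have hguard : (∑ k, 2 ^ b k) = 2 ^ m := by have := hbf.2; omega
    have hbi : b i ≠ 0 := by
      intro h0
      exact no_zero_sol hm b i h0 hguard
    have hble : 2 ^ b i ≤ 2 ^ m := by
      have : 2 ^ b i ≤ ∑ k, 2 ^ b k :=
        Finset.single_le_sum (f := fun k => 2 ^ b k) (fun k _ => Nat.zero_le _) (mem_univ i)
      omega
    have hbim : b i ≤ m := by
      by_contra hcon
      push_neg at hcon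
      have : 2 ^ m < 2 ^ b i := Nat.pow_lt_pow_right (by norm_num) hcon
      omega
    have hsum : ∑ k, 2 ^ (Function.update b i (b i - 1) k) =
        2 ^ (b i - 1) + ∑ k ∈ univ.erase i, 2 ^ b k := by
      rw [← Finset.add_sum_erase univ _ (mem_univ i), Function.update_self]
      congr 1
      refine Finset.sum_congr rfl (fun k hk => by
        rw [Function.update_of_ne (Finset.mem_erase.mp hk).1])
    have horig : ∑ k, 2 ^ b k = 2 ^ b i + ∑ k ∈ univ.erase i, 2 ^ b k := by
      rw [← Finset.add_sum_erase univ (fun k => 2 ^ b k) (mem_univ i)]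
    have hpow : 2 ^ b i = 2 ^ (b i - 1) + 2 ^ (b i - 1) := by
      conv_lhs => rw [show b i = (b i - 1) + 1 by omega]
      rw [pow_succ]; ring
    rw [Finset.mem_filter, hG, Finset.mem_filter, Finset.mem_product, Finset.mem_range, mem_ebox]
    refine ⟨⟨⟨by omega, ?_⟩, by dsimp only; omega⟩, by dsimp only; rw [Function.update_self]⟩
    intro k
    dsimp only
    rcases eq_or_ne k i with rfl | hk
    · rw [Function.update_self]; omega
    · rw [Function.update_of_ne hk]; exact hbox k
  · -- left inverse
    intro p hp
    have hfix : p.2 i = p.1 := (Finset.mem_filter.mp hp).2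
    have h1 : Function.update p.2 i (p.2 i + 1) i = p.2 i + 1 := Function.update_self _ _ _
    show (Function.update p.2 i (p.2 i + 1) i - 1,
      Function.update (Function.update p.2 i (p.2 i + 1)) i
        (Function.update p.2 i (p.2 i + 1) i - 1)) = p
    rw [h1, Function.update_idem, Nat.add_sub_cancel, Function.update_eq_self]
    exact Prod.ext (by omega) rfl
  · -- right inverse
    intro b hb
    have hbf := Finset.mem_filter.mp hb
    have hguard : (∑ k, 2 ^ b k) = 2 ^ m := by have := hbf.2; omega
    have hbi : b i ≠ 0 := fun h0 => no_zero_sol hm b i h0 hguard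
    show Function.update (Function.update b i (b i - 1)) i
        (Function.update b i (b i - 1) i + 1) = b
    rw [Function.update_self, Function.update_idem, show b i - 1 + 1 = b i by omega,
      Function.update_eq_self]
  · -- values agree
    intro p hp
    have hfix : p.2 i = p.1 := (Finset.mem_filter.mp hp).2
    have hA : ∏ k ∈ univ.erase i,
        (X k : MvPolynomial (Fin m) (ZMod 2)) ^ 2 ^ (Function.update p.2 i (p.2 i + 1) k)
        = ∏ k ∈ univ.erase i, (X k : MvPolynomial (Fin m) (ZMod 2)) ^ 2 ^ p.2 k :=
      Finset.prod_congr rfl (fun k hk => by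
        rw [Function.update_of_ne (Finset.mem_erase.mp hk).1])
    have hpow : 2 ^ (p.2 i + 1) = 2 ^ p.2 i + 2 ^ p.2 i := by rw [pow_succ]; ring
    show (X i : MvPolynomial (Fin m) (ZMod 2)) ^ 2 ^ p.1 * ∏ k, X k ^ 2 ^ p.2 k =
      ∏ k, X k ^ 2 ^ (Function.update p.2 i (p.2 i + 1) k)
    rw [← Finset.mul_prod_erase univ (fun k => X k ^ 2 ^ (Function.update p.2 i (p.2 i + 1) k))
        (mem_univ i),
      ← Finset.mul_prod_erase univ (fun k => X k ^ 2 ^ p.2 k) (mem_univ i),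
      Function.update_self, hA, ← mul_assoc, ← pow_add, ← hfix, hpow]

lemma key_vanish (m : ℕ) (hm : 1 ≤ m) (T : Finset (Fin m)) (hT : Even T.card) :
    ∑ j ∈ Finset.range m, (∑ i ∈ T, (X i : MvPolynomial (Fin m) (ZMod 2))) ^ (2^j) *
      SB m (2^m) (2^j) (2^m) = 0 := by
  have hfr : ∀ j : ℕ, (∑ i ∈ T, (X i : MvPolynomial (Fin m) (ZMod 2))) ^ (2^j) =
      ∑ i ∈ T, (X i : MvPolynomial (Fin m) (ZMod 2)) ^ (2^j) := fun j =>
    sum_pow_char_pow (p := 2) (n := j) T _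
  calc ∑ j ∈ Finset.range m, (∑ i ∈ T, (X i : MvPolynomial (Fin m) (ZMod 2))) ^ (2^j) *
      SB m (2^m) (2^j) (2^m)
      = ∑ j ∈ Finset.range m, ∑ i ∈ T,
          (X i : MvPolynomial (Fin m) (ZMod 2)) ^ (2^j) * SB m (2^m) (2^j) (2^m) := by
        refine Finset.sum_congr rfl (fun j _ => ?_)
        rw [hfr j, Finset.sum_mul]
    _ = ∑ i ∈ T, ∑ j ∈ Finset.range m,
          (X i : MvPolynomial (Fin m) (ZMod 2)) ^ (2^j) * SB m (2^m) (2^j) (2^m) :=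
        Finset.sum_comm
    _ = ∑ _i ∈ T, SB m (2^m) 0 (2^m) :=
        Finset.sum_congr rfl (fun i _ => innerSB m hm i)
    _ = T.card • SB m (2^m) 0 (2^m) := Finset.sum_const _
    _ = 0 := by
        obtain ⟨l, hl⟩ := hT
        rw [hl, ← two_mul, mul_comm, mul_smul, CharTwo.two_nsmul, smul_zero]

lemma prod_split (m : ℕ) :
    ∏ S ∈ Finset.univ.filter (fun S : Finset (Fin (m+1)) => Odd S.card),
        (∑ i ∈ S, (X i : MvPolynomial (Fin (m+1)) (ZMod 2))) =
      (rename Fin.succ (∏ S ∈ Finset.univ.filter (fun S : Finset (Fin m) => Odd S.card),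
          (∑ i ∈ S, (X i : MvPolynomial (Fin m) (ZMod 2))))) *
        ∏ T ∈ Finset.univ.filter (fun T : Finset (Fin m) => Even T.card),
          ((X 0 : MvPolynomial (Fin (m+1)) (ZMod 2)) + rename Fin.succ (∑ i ∈ T, X i)) := by
  classical
  have hsucc_inj : Function.Injective (Fin.succ : Fin m → Fin (m+1)) := Fin.succ_injective m
  set β : Finset (Fin m) → Finset (Fin (m+1)) := fun T =>
    if Even T.card then insert 0 (T.image Fin.succ) else T.image Fin.succ with hβ
  set γ : Finset (Fin (m+1)) → Finset (Fin m) := fun S =>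
    (S.erase 0).preimage Fin.succ (hsucc_inj.injOn) with hγ
  have h0not : ∀ T : Finset (Fin m), (0 : Fin (m+1)) ∉ T.image Fin.succ := by
    intro T h
    obtain ⟨i, _, hi⟩ := Finset.mem_image.mp h
    exact (Fin.succ_ne_zero i) hi
  have hβcard : ∀ T : Finset (Fin m), Odd (β T).card := by
    intro T
    simp only [hβ]
    by_cases h : Even T.card
    · rw [if_pos h, Finset.card_insert_of_notMem (h0not T),
        Finset.card_image_of_injective _ hsucc_inj]
      exact Even.add_one h
    · rw [if_neg h, Finset.card_image_of_injective _ hsucc_inj]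
      exact Nat.not_even_iff_odd.mp h
  have hβval : ∀ T : Finset (Fin m),
      ∑ i ∈ β T, (X i : MvPolynomial (Fin (m+1)) (ZMod 2)) =
        (if Even T.card then (X 0 : MvPolynomial (Fin (m+1)) (ZMod 2)) else 0)
          + rename Fin.succ (∑ i ∈ T, X i) := by
    intro T
    have himg : ∑ i ∈ T.image Fin.succ, (X i : MvPolynomial (Fin (m+1)) (ZMod 2)) =
        rename Fin.succ (∑ i ∈ T, X i) := by
      rw [map_sum, Finset.sum_image (fun x _ y _ h => hsucc_inj h)]
      exact Finset.sum_congr rfl (fun i _ => (rename_X _ _).symm)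
    simp only [hβ]
    by_cases h : Even T.card
    · rw [if_pos h, if_pos h, Finset.sum_insert (h0not T), himg]
    · rw [if_neg h, if_neg h, himg, zero_add]
  have himgpre : ∀ S' : Finset (Fin (m+1)), (0 : Fin (m+1)) ∉ S' →
      (S'.preimage Fin.succ (hsucc_inj.injOn)).image Fin.succ = S' := by
    intro S' h0
    rw [Finset.image_preimage]
    refine Finset.filter_true_of_mem (fun x hx => ?_)
    rcases Fin.eq_zero_or_eq_succ x with rfl | ⟨y, rfl⟩
    · exact absurd hx h0
    · exact ⟨y, rfl⟩
  have hcardpre : ∀ S' : Finset (Fin (m+1)), (0 : Fin (m+1)) ∉ S' →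
      ((S'.preimage Fin.succ (hsucc_inj.injOn)).card) = S'.card := by
    intro S' h0
    rw [← himgpre S' h0, Finset.card_image_of_injective _ hsucc_inj, himgpre S' h0]
  have hβγ : ∀ S : Finset (Fin (m+1)), Odd S.card → β (γ S) = S := by
    intro S hodd
    by_cases h0 : (0 : Fin (m+1)) ∈ S
    · have h1 : (0:Fin (m+1)) ∉ S.erase 0 := Finset.notMem_erase _ _
      have hev : Even (γ S).card := by
        rw [hγ]
        dsimp only
        rw [hcardpre _ h1, Finset.card_erase_of_mem h0]
        rcases hodd with ⟨k, hk⟩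
        exact ⟨k, by omega⟩
      simp only [hβ]
      rw [if_pos hev]
      rw [hγ]
      dsimp only
      rw [himgpre _ h1, Finset.insert_erase h0]
    · have h1 : S.erase 0 = S := Finset.erase_eq_of_notMem h0
      have hnev : ¬ Even (γ S).card := by
        rw [hγ]
        dsimp only
        rw [h1, hcardpre _ h0]
        exact Nat.not_even_iff_odd.mpr hodd
      simp only [hβ]
      rw [if_neg hnev, hγ]
      dsimp only
      rw [h1, himgpre _ h0]
  have hmain : ∏ S ∈ Finset.univ.filter (fun S : Finset (Fin (m+1)) => Odd S.card),
      (∑ i ∈ S, (X i : MvPolynomial (Fin (m+1)) (ZMod 2))) =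
      ∏ T : Finset (Fin m), ∑ i ∈ β T, (X i : MvPolynomial (Fin (m+1)) (ZMod 2)) := by
    refine Finset.prod_nbij' (i := γ) (j := β) ?_ ?_ ?_ ?_ ?_
    · intro S _; exact Finset.mem_univ _
    · intro T _
      simp only [Finset.mem_filter, Finset.mem_univ, true_and]
      exact hβcard T
    · intro S hS
      exact hβγ S (Finset.mem_filter.mp hS).2
    · -- γ (β T) = T
      intro T _
      ext x
      rw [hγ]
      dsimp only
      rw [Finset.mem_preimage, Finset.mem_erase]
      simp only [hβ]
      by_cases h : Even T.card
      · rw [if_pos h]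
        simp [Fin.succ_ne_zero, hsucc_inj.eq_iff]
      · rw [if_neg h]
        simp [Fin.succ_ne_zero, hsucc_inj.eq_iff]
    · intro S hS
      rw [hβγ S (Finset.mem_filter.mp hS).2]
  rw [hmain]
  rw [← Finset.prod_filter_mul_prod_filter_not univ (fun T : Finset (Fin m) => Even T.card)]
  rw [mul_comm]
  congr 1
  · -- odd part
    have hfil : Finset.univ.filter (fun T : Finset (Fin m) => ¬ Even T.card) =
        Finset.univ.filter (fun T : Finset (Fin m) => Odd T.card) := by
      refine Finset.filter_congr (fun T _ => ?_)
      simp [Nat.not_even_iff_odd]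
    rw [hfil, map_prod]
    refine Finset.prod_congr rfl (fun T hT => ?_)
    rw [hβval T, if_neg (by
      have := (Finset.mem_filter.mp hT).2
      exact Nat.not_even_iff_odd.mpr this), zero_add]
  · -- even part
    refine Finset.prod_congr rfl (fun T hT => ?_)
    rw [hβval T, if_pos (Finset.mem_filter.mp hT).2]

lemma psi_rename (m : ℕ) (q : MvPolynomial (Fin m) (ZMod 2)) :
    finSuccEquiv (ZMod 2) m (rename Fin.succ q) = Polynomial.C q := by
  have h : ((finSuccEquiv (ZMod 2) m : MvPolynomial (Fin (m+1)) (ZMod 2) →+*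
      Polynomial (MvPolynomial (Fin m) (ZMod 2))).comp
        (rename (Fin.succ : Fin m → Fin (m+1)) : MvPolynomial (Fin m) (ZMod 2) →ₐ[ZMod 2]
          MvPolynomial (Fin (m+1)) (ZMod 2)).toRingHom) =
      (Polynomial.C : MvPolynomial (Fin m) (ZMod 2) →+* _) := by
    apply MvPolynomial.ringHom_ext
    · intro r
      simp [finSuccEquiv_apply]
    · intro i
      simp [finSuccEquiv_X_succ]
  exact RingHom.congr_fun h q

lemma key_factor (m : ℕ) (hm : 1 ≤ m) :
    finSuccEquiv (ZMod 2) m (P (m+1)) =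
      Polynomial.C (P m) * ∏ T ∈ Finset.univ.filter (fun T : Finset (Fin m) => Even T.card),
        (Polynomial.X + Polynomial.C (∑ i ∈ T, X i)) := by
  classical
  set R' := MvPolynomial (Fin m) (ZMod 2) with hR'
  let K := FractionRing R'
  let ι : R' →+* K := algebraMap R' K
  have hιinj : Function.Injective ι := IsFractionRing.injective R' K
  haveI : CharP K 2 := charP_of_injective_ringHom hιinj 2
  set d : ℕ := 2 ^ (m-1) with hd
  have hd1 : 1 ≤ d := Nat.one_le_two_pow
  apply Polynomial.map_injective ι hιinj
  rw [Polynomial.map_mul, Polynomial.map_C, Polynomial.map_prod, psi_P m hm,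
    Polynomial.map_sum]
  simp only [Polynomial.map_mul, Polynomial.map_C, Polynomial.map_pow, Polynomial.map_X,
    Polynomial.map_add]
  set ev := Finset.univ.filter (fun T : Finset (Fin m) => Even T.card) with hev
  set M : Polynomial K := ∏ T ∈ ev, (Polynomial.X + Polynomial.C (ι (∑ i ∈ T, X i))) with hM
  set q : Polynomial K := ∑ j ∈ Finset.range m,
    Polynomial.C (ι (SB m (2^m) (2^j) (2^m))) * Polynomial.X ^ (2^j) with hq
  show q = Polynomial.C (ι (P m)) * M
  have hMmonic : M.Monic :=
    Polynomial.monic_prod_of_monic _ _ (fun T _ => Polynomial.monic_X_add_C _)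
  have hcard : ev.card = d := card_even_subsets m hm
  have hMdeg : M.natDegree = d := by
    rw [hM, Polynomial.natDegree_prod_of_monic _ _ (fun T _ => Polynomial.monic_X_add_C _)]
    rw [Finset.sum_congr rfl (fun T _ => Polynomial.natDegree_X_add_C _)]
    simp [hcard]
  -- the split of q
  have hqsplit : q = (∑ j ∈ Finset.range (m-1),
      Polynomial.C (ι (SB m (2^m) (2^j) (2^m))) * Polynomial.X ^ (2^j)) +
      Polynomial.C (ι (P m)) * Polynomial.X ^ d := by
    rw [hq]
    have hr : Finset.range m = Finset.range ((m-1)+1) := by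
      congr 1
      omega
    rw [hr, Finset.sum_range_succ, SB_top m hm, ← hd]
  set qlow : Polynomial K := ∑ j ∈ Finset.range (m-1),
    Polynomial.C (ι (SB m (2^m) (2^j) (2^m))) * Polynomial.X ^ (2^j) with hqlow
  have hqlowdeg : qlow.natDegree < d := by
    rcases Nat.eq_zero_or_pos (m-1) with h0 | h0
    · rw [hqlow, h0]
      simp only [Finset.sum_range_zero, Polynomial.natDegree_zero]; omega
    have : qlow.natDegree ≤ d - 1 := by
      rw [hqlow]
      refine Polynomial.natDegree_sum_le_of_forall_le _ _ (fun j hj => ?_)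
      refine (Polynomial.natDegree_C_mul_le _ _).trans ?_
      rw [Polynomial.natDegree_X_pow]
      have : 2^j < 2^(m-1) := Nat.pow_lt_pow_right (by norm_num) (Finset.mem_range.mp hj)
      omega
    omega
  have hsubdeg : (M - Polynomial.X ^ d).natDegree < d := by
    by_cases hz : M - Polynomial.X ^ d = 0
    · rw [hz]; simp only [Polynomial.natDegree_zero]; omega
    have hdeg : M.degree = (Polynomial.X ^ d : Polynomial K).degree := by
      rw [Polynomial.degree_X_pow, Polynomial.degree_eq_natDegree hMmonic.ne_zero, hMdeg]
    have hlt := Polynomial.degree_sub_lt hdeg hMmonic.ne_zero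
      (by rw [hMmonic.leadingCoeff, Polynomial.leadingCoeff_X_pow])
    rw [Polynomial.degree_eq_natDegree hMmonic.ne_zero, hMdeg] at hlt
    exact (Polynomial.natDegree_lt_iff_degree_lt hz).mpr hlt
  -- difference has small degree
  have hdiffdeg : (q - Polynomial.C (ι (P m)) * M).natDegree < d := by
    have hrw : q - Polynomial.C (ι (P m)) * M =
        qlow - Polynomial.C (ι (P m)) * (M - Polynomial.X ^ d) := by
      rw [hqsplit]; ring
    rw [hrw, sub_eq_add_neg]
    refine lt_of_le_of_lt (Polynomial.natDegree_add_le _ _) ?_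
    rw [Polynomial.natDegree_neg]
    exact max_lt hqlowdeg (lt_of_le_of_lt (Polynomial.natDegree_C_mul_le _ _) hsubdeg)
  -- evaluation at the points
  have heval : ∀ T ∈ ev, (q - Polynomial.C (ι (P m)) * M).eval (ι (∑ i ∈ T, X i)) = 0 := by
    intro T hT
    have hTev : Even T.card := (Finset.mem_filter.mp hT).2
    have hq0 : q.eval (ι (∑ i ∈ T, X i)) = 0 := by
      rw [hq, Polynomial.eval_finset_sum]
      have : ∀ j ∈ Finset.range m,
          (Polynomial.C (ι (SB m (2^m) (2^j) (2^m))) * Polynomial.X ^ (2^j)).eval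
            (ι (∑ i ∈ T, X i)) =
          ι ((∑ i ∈ T, (X i : MvPolynomial (Fin m) (ZMod 2))) ^ (2^j) *
            SB m (2^m) (2^j) (2^m)) := by
        intro j _
        rw [Polynomial.eval_mul, Polynomial.eval_C, Polynomial.eval_pow, Polynomial.eval_X,
          map_mul, map_pow]
        ring
      rw [Finset.sum_congr rfl this, ← map_sum, key_vanish m hm T hTev, map_zero]
    have hM0 : M.eval (ι (∑ i ∈ T, X i)) = 0 := by
      rw [hM, Polynomial.eval_prod]
      refine Finset.prod_eq_zero hT ?_
      rw [Polynomial.eval_add, Polynomial.eval_X, Polynomial.eval_C,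
        CharTwo.add_self_eq_zero]
    rw [Polynomial.eval_sub, hq0, Polynomial.eval_mul, hM0, mul_zero, sub_zero]
  -- the set of evaluation points
  have hzero : q - Polynomial.C (ι (P m)) * M = 0 := by
    refine Polynomial.eq_zero_of_natDegree_lt_card_of_eval_eq_zero' _
      (ev.image (fun T => ι (∑ i ∈ T, X i))) ?_ ?_
    · intro x hx
      obtain ⟨T, hT, rfl⟩ := Finset.mem_image.mp hx
      exact heval T hT
    · rw [Finset.card_image_of_injective _ (fun T T' h => linform_inj (hιinj h))]
      omega
  have := sub_eq_zero.mp hzero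
  exact this

end Aux

section Main
open Finset

/-- The product over all subsets `S ⊆ {1,…,n}` of odd cardinality of the linear forms
`∑_{i ∈ S} t i` equals `P n`. -/
theorem stmt_0 (n : ℕ) (hn : 1 ≤ n) :
    ∏ S ∈ Finset.univ.filter (fun S : Finset (Fin n) => Odd S.card),
      (∑ i ∈ S, (X i : MvPolynomial (Fin n) (ZMod 2))) = P n := by
  induction n, hn using Nat.le_induction with
  | base =>
    have hfil : (Finset.univ.filter (fun S : Finset (Fin 1) => Odd S.card)) = {{0}} := by
      decide
    rw [hfil, Finset.prod_singleton, Finset.sum_singleton]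
    rw [P_eq]
    have hSB : SB 1 (2^(1-1)) 0 (2^(1-1)) = ∑ j ∈ Finset.range 2,
        (if 0 + 2^j = 1 then (X (0:Fin 1) : MvPolynomial (Fin 1) (ZMod 2))^(2^j) else 0) := by
      rw [SB]
      refine Finset.sum_nbij' (i := fun e => e 0) (j := fun j => (fun _ => j : Fin 1 → ℕ))
        ?_ ?_ ?_ ?_ ?_
      · intro e he
        have : ∀ i, e i ≤ 1 := by
          intro i
          have := (Fintype.mem_piFinset.mp he) i
          simpa [Nat.lt_succ_iff] using this
        simpa [Finset.mem_range, Nat.lt_succ_iff] using this 0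
      · intro j hj
        rw [Finset.mem_range] at hj
        refine Fintype.mem_piFinset.mpr (fun i => ?_)
        simpa [Nat.lt_succ_iff] using by omega
      · intro e _
        funext x
        have : x = 0 := Subsingleton.elim _ _
        rw [this]
      · intro j _
        rfl
      · intro e _
        rw [Fin.sum_univ_one, Fin.prod_univ_one]
        norm_num
    rw [hSB, Finset.sum_range_succ, Finset.sum_range_succ, Finset.sum_range_zero]
    norm_num
  | succ m hm ih =>
    apply (finSuccEquiv (ZMod 2) m).injective
    rw [key_factor m hm, prod_split m, map_mul, psi_rename, ih, map_prod]
    congr 1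
    refine Finset.prod_congr rfl (fun T _ => ?_)
    rw [map_add, finSuccEquiv_X_zero, psi_rename]

end Main
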